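/- Define ω : ℂ² → ℂ by ω(x,y) = (e^{xy} - 1)/x for x ≠ 0 and ω(0,y) = y, and χ : ℂ² → ℂ² by χ(x,y) = (x, -ω(x,y)). Then χ is holomorphic, its image is exactly {(a,b) ∈ ℂ² : ab ≠ 1}, and its differential at (0,0) is invertible (indeed equal to the identity up to sign in the second coordinate). -/

import Mathlib

noncomputable def omegaBL : ℂ × ℂ → ℂ :=
  fun p => if p.1 = 0 then p.2 else (Complex.exp (p.1 * p.2) - 1) / p.1

noncomputable def chiBL : ℂ × ℂ → ℂ × ℂ :=
  fun p => (p.1, -omegaBL p)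

noncomputable def GBL : ℂ → ℂ := dslope Complex.exp 0

lemma GBL_zero : GBL 0 = 1 := by
  simp [GBL, dslope_same, Complex.deriv_exp]

lemma GBL_diff : Differentiable ℂ GBL := by
  intro z
  rcases eq_or_ne z 0 with rfl | hz
  · obtain ⟨p, hp⟩ := analyticAt_cexp (z := 0)
    exact hp.has_fpower_series_dslope_fslope.analyticAt.differentiableAt
  · have h1 : DifferentiableAt ℂ (fun w => (w - 0)⁻¹ • (Complex.exp w - Complex.exp 0)) z := by
      apply DifferentiableAt.fun_smul
      · exact ((differentiableAt_id.sub_const 0).inv (by simpa using hz))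
      · exact (Complex.differentiable_exp z).sub_const _
    apply h1.congr_of_eventuallyEq
    filter_upwards [isOpen_ne.mem_nhds hz] with w hw
    rw [GBL, dslope_of_ne _ hw, slope_def_module]

lemma omegaBL_eq (p : ℂ × ℂ) : omegaBL p = p.2 * GBL (p.1 * p.2) := by
  rcases eq_or_ne p.1 0 with h1 | h1
  · simp [omegaBL, h1, GBL_zero]
  · rcases eq_or_ne p.2 0 with h2 | h2
    · simp [omegaBL, h1, h2]
    · have hm : p.1 * p.2 ≠ 0 := mul_ne_zero h1 h2
      rw [omegaBL]
      simp only [h1, if_false, GBL, dslope_of_ne _ hm, slope_def_module, sub_zero,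
        Complex.exp_zero, smul_eq_mul]
      field_simp

lemma omegaBL_diff : Differentiable ℂ omegaBL := by
  have : omegaBL = fun p : ℂ × ℂ => p.2 * GBL (p.1 * p.2) := funext omegaBL_eq
  rw [this]
  exact differentiable_snd.mul (GBL_diff.comp (differentiable_fst.mul differentiable_snd))

lemma omegaBL_fderiv : HasFDerivAt omegaBL (ContinuousLinearMap.snd ℂ ℂ ℂ) (0, 0) := by
  have hfun : omegaBL = fun p : ℂ × ℂ => p.2 * GBL (p.1 * p.2) := funext omegaBL_eq
  have hmul : HasFDerivAt (fun p : ℂ × ℂ => p.1 * p.2) (0 : ℂ × ℂ →L[ℂ] ℂ) ((0 : ℂ), (0 : ℂ)) := by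
    have h1 : HasFDerivAt (Prod.fst : ℂ × ℂ → ℂ) (ContinuousLinearMap.fst ℂ ℂ ℂ) (0, 0) :=
      hasFDerivAt_fst
    have h2 : HasFDerivAt (Prod.snd : ℂ × ℂ → ℂ) (ContinuousLinearMap.snd ℂ ℂ ℂ) (0, 0) :=
      hasFDerivAt_snd
    exact (h1.fun_mul h2).congr_fderiv (ContinuousLinearMap.ext fun v => by simp)
  have hG : HasFDerivAt (fun p : ℂ × ℂ => GBL (p.1 * p.2)) (0 : ℂ × ℂ →L[ℂ] ℂ)
      ((0 : ℂ), (0 : ℂ)) := by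
    have := ((GBL_diff (0 * 0)).hasFDerivAt).comp ((0 : ℂ), (0 : ℂ)) hmul
    exact this.congr_fderiv (ContinuousLinearMap.ext fun v => by simp)
  have h2 : HasFDerivAt (Prod.snd : ℂ × ℂ → ℂ) (ContinuousLinearMap.snd ℂ ℂ ℂ) (0, 0) :=
    hasFDerivAt_snd
  have h := h2.fun_mul hG
  rw [hfun]
  exact h.congr_fderiv (ContinuousLinearMap.ext fun v => by simp [GBL_zero])

lemma chiBL_range : Set.range chiBL = {p : ℂ × ℂ | p.1 * p.2 ≠ 1} := by
  ext ⟨a, b⟩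
  simp only [Set.mem_range, Set.mem_setOf_eq]
  constructor
  · rintro ⟨⟨x, y⟩, h⟩
    simp only [chiBL, Prod.mk.injEq] at h
    obtain ⟨rfl, hb⟩ := h
    rcases eq_or_ne x 0 with rfl | hx
    · simp
    · rw [omegaBL] at hb
      simp only [hx, if_false] at hb
      rw [← hb]
      intro hcon
      apply Complex.exp_ne_zero (x * y)
      field_simp at hcon
      linear_combination -hcon
  · intro hab
    rcases eq_or_ne a 0 with rfl | ha
    · exact ⟨(0, -b), by simp [chiBL, omegaBL]⟩
    · refine ⟨(a, Complex.log (1 - a * b) / a), ?_⟩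
      have hw : (1 : ℂ) - a * b ≠ 0 := sub_ne_zero.mpr (Ne.symm hab)
      simp only [chiBL, omegaBL, ha, if_false, Prod.mk.injEq, true_and]
      rw [mul_div_cancel₀ _ ha, Complex.exp_log hw]
      field_simp
      ring

theorem chi_holomorphic_surjective_dominating :
    Differentiable ℂ chiBL ∧
    Set.range chiBL = {p : ℂ × ℂ | p.1 * p.2 ≠ 1} ∧
    HasFDerivAt chiBL
      ((ContinuousLinearMap.fst ℂ ℂ ℂ).prod (-(ContinuousLinearMap.snd ℂ ℂ ℂ)))
      (0, 0) := by
  refine ⟨?_, chiBL_range, ?_⟩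
  · exact differentiable_fst.prodMk omegaBL_diff.neg
  · exact (hasFDerivAt_fst).prodMk omegaBL_fderiv.neg
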